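/- For any finite linearly ordered set S and T ⊆ S, the dual matroid M_T(S)* equals M_{T'}(S_φ), where T' = S \ T is the complement of T and S_φ is the set S equipped with the reversed linear order. In particular, the class of freedom matroids is closed under duality. -/

import Mathlib

open Matroid Set

/-- The flag `(T₀, …, T_r)` on a linearly ordered set determined by an `r`-element
subset `T = {t₁ < ⋯ < t_r}`: `T_r` is everything and `Tᵢ = { s : s < t_{i+1} }` for
`0 ≤ i ≤ r-1`. -/
def flagOf {α : Type*} [LinearOrder α] (T : Finset α) {r : ℕ} (hT : T.card = r)
    (i : ℕ) : Set α :=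
  if h : i < r then {s : α | s < T.orderEmbOfFin hT ⟨i, h⟩} else Set.univ

/-- The flag on the *reversal* `S_φ` of a linearly ordered set determined by an
`m`-element subset `C`: with `C = {c₁ > ⋯ > c_m}` listed in decreasing order (i.e.
increasing order of `S_φ`), the `i`-th member of the flag for `i < m` is
`{ s : s < c_{i+1} in S_φ } = { s : s > c_{i+1} }`, where `c_{i+1}` is the
`(m-1-i)`-th smallest element of `C`; the `m`-th member is everything. -/
def flagOfRev {α : Type*} [LinearOrder α] (C : Finset α) {m : ℕ} (hC : C.card = m)
    (i : ℕ) : Set α :=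
  if h : i < m then {s : α | C.orderEmbOfFin hC ⟨m - 1 - i, by omega⟩ < s} else Set.univ

section AuxLemmas


lemma finCount (q a b : ℕ) :
    ((Finset.univ : Finset (Fin q)).filter (fun i => a ≤ i.val ∧ i.val < b)).card
      = min b q - min a q := by
  have h : ((Finset.univ : Finset (Fin q)).filter (fun i => a ≤ i.val ∧ i.val < b)).map
      Fin.valEmbedding = Finset.Ico (min a q) (min b q) := by
    ext x
    simp only [Finset.mem_map, Finset.mem_filter, Finset.mem_univ, true_and, Finset.mem_Ico,
      Fin.valEmbedding_apply]
    constructor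
    · rintro ⟨i, ⟨h1, h2⟩, rfl⟩
      have := i.isLt; omega
    · rintro ⟨h1, h2⟩
      have hxq : x < q := by omega
      exact ⟨⟨x, hxq⟩, ⟨by simpa using by omega, by simpa using by omega⟩, rfl⟩
  rw [← Finset.card_map Fin.valEmbedding, h, Nat.card_Ico]

lemma map_orderEmbOfFin {α : Type*} [LinearOrder α] (A : Finset α) {a : ℕ} (hA : A.card = a) :
    Finset.univ.map (A.orderEmbOfFin hA).toEmbedding = A := by
  ext x
  simp only [Finset.mem_map, Finset.mem_univ, true_and, RelEmbedding.coe_toEmbedding]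
  constructor
  · rintro ⟨i, rfl⟩; exact A.orderEmbOfFin_mem hA i
  · intro hx
    have : x ∈ Set.range (A.orderEmbOfFin hA) := by
      rw [Finset.range_orderEmbOfFin]; exact hx
    exact this

variable {α : Type*} [LinearOrder α]

lemma card_filter_fin (A : Finset α) {a : ℕ} (hA : A.card = a) (p : α → Prop)
    [DecidablePred p] :
    (A.filter p).card
      = ((Finset.univ : Finset (Fin a)).filter (fun i => p (A.orderEmbOfFin hA i))).card := by
  conv_lhs => rw [← map_orderEmbOfFin A hA]
  rw [Finset.filter_map, Finset.card_map]
  rfl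

lemma filter_lt_card (A : Finset α) {a : ℕ} (hA : A.card = a) (k : Fin a) :
    (A.filter (· < A.orderEmbOfFin hA k)).card = k := by
  rw [card_filter_fin A hA]
  have : ((Finset.univ : Finset (Fin a)).filter
        (fun i => A.orderEmbOfFin hA i < A.orderEmbOfFin hA k))
      = ((Finset.univ : Finset (Fin a)).filter (fun i => 0 ≤ i.val ∧ i.val < k.val)) := by
    apply Finset.filter_congr
    intro i _
    rw [(A.orderEmbOfFin hA).lt_iff_lt, Fin.lt_def]
    exact ⟨fun h => ⟨Nat.zero_le _, h⟩, fun h => h.2⟩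
  rw [this, finCount]
  have := k.isLt; omega

lemma filter_le_card (A : Finset α) {a : ℕ} (hA : A.card = a) (k : Fin a) :
    (A.filter (fun x => A.orderEmbOfFin hA k ≤ x)).card = a - k := by
  rw [card_filter_fin A hA]
  have : ((Finset.univ : Finset (Fin a)).filter
        (fun i => A.orderEmbOfFin hA k ≤ A.orderEmbOfFin hA i))
      = ((Finset.univ : Finset (Fin a)).filter (fun i => k.val ≤ i.val ∧ i.val < a)) := by
    apply Finset.filter_congr
    intro i _
    rw [(A.orderEmbOfFin hA).le_iff_le, Fin.le_def]
    exact ⟨fun h => ⟨h, i.isLt⟩, And.left⟩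
  rw [this, finCount]
  have := k.isLt; omega

lemma filter_gt_card (A : Finset α) {a : ℕ} (hA : A.card = a) (k : Fin a) :
    (A.filter (fun x => A.orderEmbOfFin hA k < x)).card = a - (k + 1) := by
  rw [card_filter_fin A hA]
  have : ((Finset.univ : Finset (Fin a)).filter
        (fun i => A.orderEmbOfFin hA k < A.orderEmbOfFin hA i))
      = ((Finset.univ : Finset (Fin a)).filter (fun i => k.val + 1 ≤ i.val ∧ i.val < a)) := by
    apply Finset.filter_congr
    intro i _
    rw [(A.orderEmbOfFin hA).lt_iff_lt, Fin.lt_def]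
    exact ⟨fun h => ⟨h, i.isLt⟩, fun h => h.1⟩
  rw [this, finCount]
  have := k.isLt; omega

lemma le_orderEmbOfFin_count (A : Finset α) {a : ℕ} (hA : A.card = a) (x : α)
    (hp : (A.filter (fun y => y < x)).card < a) :
    x ≤ A.orderEmbOfFin hA ⟨(A.filter (fun y => y < x)).card, hp⟩ := by
  set p := (A.filter (fun y => y < x)).card with hpdef
  by_contra hcon
  push_neg at hcon
  have hsub : (((Finset.univ : Finset (Fin a)).filter (fun i => 0 ≤ i.val ∧ i.val < p + 1)).map
      (A.orderEmbOfFin hA).toEmbedding) ⊆ A.filter (fun y => y < x) := by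
    intro y hy
    rw [Finset.mem_map] at hy
    obtain ⟨i, hi, rfl⟩ := hy
    rw [Finset.mem_filter] at hi
    rw [Finset.mem_filter]
    refine ⟨A.orderEmbOfFin_mem hA i, ?_⟩
    calc (A.orderEmbOfFin hA) i ≤ (A.orderEmbOfFin hA) ⟨p, hp⟩ :=
          (A.orderEmbOfFin hA).monotone (by rw [Fin.le_def]; exact Nat.lt_succ_iff.mp hi.2.2)
      _ < x := hcon
  have hcard := Finset.card_le_card hsub
  rw [Finset.card_map, finCount] at hcard
  omega

lemma orderEmbOfFin_le_count (A : Finset α) {a : ℕ} (hA : A.card = a) (x : α)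
    (hk : (A.filter (fun y => x < y)).card < a) :
    A.orderEmbOfFin hA ⟨a - 1 - (A.filter (fun y => x < y)).card, by omega⟩ ≤ x := by
  set k := (A.filter (fun y => x < y)).card with hkdef
  by_contra hcon
  push_neg at hcon
  have hsub : (((Finset.univ : Finset (Fin a)).filter (fun i => a - 1 - k ≤ i.val ∧ i.val < a)).map
      (A.orderEmbOfFin hA).toEmbedding) ⊆ A.filter (fun y => x < y) := by
    intro y hy
    rw [Finset.mem_map] at hy
    obtain ⟨i, hi, rfl⟩ := hy
    rw [Finset.mem_filter] at hi
    rw [Finset.mem_filter]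
    refine ⟨A.orderEmbOfFin_mem hA i, ?_⟩
    calc x < A.orderEmbOfFin hA ⟨a - 1 - k, by omega⟩ := hcon
      _ ≤ (A.orderEmbOfFin hA) i := (A.orderEmbOfFin hA).monotone (by rw [Fin.le_def]; exact hi.2.1)
  have hcard := Finset.card_le_card hsub
  rw [Finset.card_map, finCount] at hcard
  omega

lemma card_filter_univ {β : Type*} [Fintype β] [DecidableEq β] (T : Finset β) (p : β → Prop)
    [DecidablePred p] :
    (Finset.univ.filter p).card = (T.filter p).card + (Tᶜ.filter p).card := by
  rw [← Finset.card_union_of_disjoint, ← Finset.filter_union, Finset.union_compl]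
  exact Finset.disjoint_filter_filter disjoint_compl_right

lemma filter_lt_card' (A : Finset α) {a : ℕ} (hA : A.card = a) (v : ℕ) (hv : v < a) :
    (A.filter (fun y => y < A.orderEmbOfFin hA ⟨v, hv⟩)).card = v :=
  filter_lt_card A hA ⟨v, hv⟩

lemma filter_le_card' (A : Finset α) {a : ℕ} (hA : A.card = a) (v : ℕ) (hv : v < a) :
    (A.filter (fun y => A.orderEmbOfFin hA ⟨v, hv⟩ ≤ y)).card = a - v :=
  filter_le_card A hA ⟨v, hv⟩

lemma filter_gt_card' (A : Finset α) {a : ℕ} (hA : A.card = a) (v : ℕ) (hv : v < a) :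
    (A.filter (fun y => A.orderEmbOfFin hA ⟨v, hv⟩ < y)).card = a - 1 - v := by
  rw [filter_gt_card A hA ⟨v, hv⟩]; simp only [Fin.val_mk]; omega

lemma le_orderEmbOfFin_count' (A : Finset α) {a : ℕ} (hA : A.card = a) (x : α)
    (v : ℕ) (hv : v < a) (hveq : (A.filter (fun y => y < x)).card = v) :
    x ≤ A.orderEmbOfFin hA ⟨v, hv⟩ := by
  subst hveq
  exact le_orderEmbOfFin_count A hA x hv

lemma orderEmbOfFin_le_count' (A : Finset α) {a : ℕ} (hA : A.card = a) (x : α)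
    (v : ℕ) (hv : v < a) (hveq : v = a - 1 - (A.filter (fun y => x < y)).card)
    (hlt : (A.filter (fun y => x < y)).card < a) :
    A.orderEmbOfFin hA ⟨v, hv⟩ ≤ x := by
  subst hveq
  exact orderEmbOfFin_le_count A hA x hlt


end AuxLemmas

/-- For a finite linearly ordered set `S` (here the whole type, with
`n` elements) and `T ⊆ S`, the dual matroid `M_T(S)✶` equals `M_{T'}(S_φ)`, where
`T' = S \ T` and `S_φ` is `S` with the reversed order.  In particular, the class of
freedom matroids is closed under duality. -/
theorem freedom_matroid_dual {α : Type*} [Fintype α] [LinearOrder α]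
    (n : ℕ) (hn : Fintype.card α = n)
    (T : Finset α) (r : ℕ) (hT : T.card = r) (hTc : Tᶜ.card = n - r)
    (M : Matroid α) (hE : M.E = Set.univ)
    (hInd : ∀ I : Set α, M.Indep I ↔ ∀ i ≤ r, (I ∩ flagOf T hT i).ncard ≤ i)
    (N : Matroid α) (hNE : N.E = Set.univ)
    (hNInd : ∀ I : Set α,
      N.Indep I ↔ ∀ i ≤ n - r, (I ∩ flagOfRev Tᶜ hTc i).ncard ≤ i) :
    M✶ = N := by
  classical
  have hr : r ≤ n := by rw [← hn, ← hT]; exact T.card_le_univ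
  -- unfolding the flags
  have hflag_lt : ∀ (i : ℕ) (h : i < r),
      flagOf T hT i = {s | s < T.orderEmbOfFin hT ⟨i, h⟩} := fun i h => dif_pos h
  have hflag_top : ∀ i, ¬ i < r → flagOf T hT i = Set.univ := fun i h => dif_neg h
  have hrev_lt : ∀ (j : ℕ) (h : j < n - r),
      flagOfRev Tᶜ hTc j
        = {s | Tᶜ.orderEmbOfFin hTc ⟨n - r - 1 - j, by omega⟩ < s} := fun j h => dif_pos h
  have hrev_top : ∀ j, ¬ j < n - r → flagOfRev Tᶜ hTc j = Set.univ := fun j h => dif_neg h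
  -- moving between ncard and Finset.card
  have hncard : ∀ (I : Set α) (p : α → Prop),
      (I ∩ {s | p s}).ncard = (I.toFinset.filter p).card := by
    intro I p
    have : I ∩ {s | p s} = ↑(I.toFinset.filter p) := by
      ext x; simp [Set.mem_toFinset]
    rw [this, Set.ncard_coe_finset]
  -- basic independence facts
  have hIndCard : ∀ J : Set α, M.Indep J → J.ncard ≤ r := by
    intro J hJ
    have := (hInd J).1 hJ r le_rfl
    rwa [hflag_top r (lt_irrefl r), Set.inter_univ] at this
  have hTind : M.Indep ↑T := by
    rw [hInd]
    intro i hi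
    by_cases h : i < r
    · rw [hflag_lt i h]
      have he : (↑T : Set α) ∩ {s | s < T.orderEmbOfFin hT ⟨i, h⟩}
          = ↑(T.filter (fun y => y < T.orderEmbOfFin hT ⟨i, h⟩)) := by
        ext x; simp
      rw [he, Set.ncard_coe_finset, filter_lt_card' T hT i h]
    · rw [hflag_top i h, Set.inter_univ, Set.ncard_coe_finset, hT]; omega
  have hbasecard : ∀ B : Set α, M.IsBase B → B.ncard = r := by
    intro B hB
    obtain ⟨B', hB', hTB'⟩ := hTind.exists_isBase_superset
    have h1 : B'.ncard ≤ r := hIndCard B' hB'.indep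
    have h2 : r ≤ B'.ncard := by
      have := Set.ncard_le_ncard hTB' (Set.toFinite B')
      rwa [Set.ncard_coe_finset, hT] at this
    have h3 := hB.ncard_eq_ncard_of_isBase hB'
    omega
  have hbase : ∀ B : Set α, M.IsBase B ↔ M.Indep B ∧ B.ncard = r := by
    intro B
    refine ⟨fun h => ⟨h.indep, hbasecard B h⟩, ?_⟩
    rintro ⟨hi, hc⟩
    obtain ⟨B', hB', hsub⟩ := hi.exists_isBase_superset
    have hBc' := hbasecard B' hB'
    have : B = B' := Set.eq_of_subset_of_ncard_le hsub (by omega) (Set.toFinite B')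
    rwa [this]
  refine Matroid.ext_indep (by rw [Matroid.dual_ground, hE, hNE]) ?_
  intro I hIE
  rw [Matroid.dual_indep_iff_exists', hNInd, hE]
  constructor
  · rintro ⟨-, B, hB, hdisj⟩ j hj
    by_cases hjm : j < n - r
    · have key1 : ∀ c : α, c ∈ Tᶜ → (Tᶜ.filter (fun y => c < y)).card = j →
          (I ∩ {s | c < s}).ncard ≤ j := by
        intro c hcmem hcnt
        have hcT : c ∉ T := Finset.mem_compl.1 hcmem
        have hBind := (hInd B).1 hB.indep
        have hBcard := hbasecard B hB
        set p := (T.filter (fun y => y < c)).card with hpdef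
        have hpr : p ≤ r := hT ▸ Finset.card_filter_le T _
        have hTgt : (T.filter (fun y => c < y)).card = r - p := by
          have hcongr : T.filter (fun y => c < y) = T.filter (fun y => ¬ y < c) := by
            apply Finset.filter_congr
            intro x hx
            simp only [not_lt]
            constructor
            · exact le_of_lt
            · intro hle
              rcases eq_or_lt_of_le hle with h | h
              · exact absurd (show c ∈ T by rw [h]; exact hx) hcT
              · exact h
          have hsum := Finset.card_filter_add_card_filter_not
            (s := T) (p := fun y => y < c)
          rw [hcongr]
          omega
        have huniv : (Finset.univ.filter (fun y => c < y)).card = (r - p) + j := by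
          rw [card_filter_univ T (fun y => c < y), hTgt, hcnt]
        have hU : ({s | c < s} : Set α).ncard = (r - p) + j := by
          have he : ({s | c < s} : Set α) = ↑(Finset.univ.filter (fun y => c < y)) := by
            ext x; simp
          rw [he, Set.ncard_coe_finset, huniv]
        have hBU : r - p ≤ (B ∩ {s | c < s}).ncard := by
          by_cases hpr' : p < r
          · have hcp : c < T.orderEmbOfFin hT ⟨p, hpr'⟩ := by
              refine lt_of_le_of_ne (le_orderEmbOfFin_count' T hT c p hpr' hpdef.symm) ?_
              intro hEq
              exact hcT (by rw [hEq]; exact T.orderEmbOfFin_mem hT ⟨p, hpr'⟩)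
            have hsubset : B \ {s | c < s} ⊆ B ∩ flagOf T hT p := by
              intro x hx
              refine ⟨hx.1, ?_⟩
              rw [hflag_lt p hpr']
              exact lt_of_le_of_lt (not_lt.1 hx.2) hcp
            have h5 : (B \ {s | c < s}).ncard ≤ p :=
              le_trans (le_trans (Set.ncard_le_ncard hsubset (Set.toFinite _)) (le_refl _))
                (hBind p hpr'.le)
            have h6 := Set.ncard_inter_add_ncard_diff_eq_ncard B {s | c < s} (Set.toFinite B)
            omega
          · omega
        have h7 : (I ∩ {s | c < s}).ncard + (B ∩ {s | c < s}).ncard ≤ (r - p) + j := by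
          rw [← hU, ← Set.ncard_union_eq
            (hdisj.mono Set.inter_subset_left Set.inter_subset_left)
            (Set.toFinite _) (Set.toFinite _)]
          exact Set.ncard_le_ncard
            (Set.union_subset Set.inter_subset_right Set.inter_subset_right) (Set.toFinite _)
        omega
      rw [hrev_lt j hjm]
      refine key1 _ (Tᶜ.orderEmbOfFin_mem hTc _) ?_
      have h2 := filter_gt_card' Tᶜ hTc (n - r - 1 - j) (by omega)
      exact h2.trans (by omega)
    · rw [hrev_top j hjm, Set.inter_univ]
      have hBn := hbasecard B hB
      have hIB : I ⊆ Set.univ \ B := fun x hx =>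
        ⟨trivial, fun hxB => (Set.disjoint_left.1 hdisj) hx hxB⟩
      have h8 := Set.ncard_le_ncard hIB (Set.toFinite _)
      have hdiff : (Set.univ \ B).ncard = n - r := by
        rw [Set.ncard_diff (Set.subset_univ B) (Set.toFinite B), Set.ncard_univ,
          Nat.card_eq_fintype_card, hn, hBn]
      omega
  · intro h
    refine ⟨Set.subset_univ I, ?_⟩
    by_cases hr0 : r = 0
    · refine ⟨∅, (hbase ∅).2 ⟨?_, by simp [hr0]⟩, Set.disjoint_empty I⟩
      rw [hInd]
      intro i hi
      simp
    -- now r ≥ 1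
    have hIm : I.ncard ≤ n - r := by
      have h0 := h (n - r) le_rfl
      rwa [hrev_top (n - r) (lt_irrefl _), Set.inter_univ] at h0
    set Xf : Finset α := I.toFinsetᶜ with hXdef
    have hXcard : Xf.card = n - I.ncard := by
      rw [hXdef, Finset.card_compl, hn, Set.ncard_eq_toFinset_card' I]
    have hrX : r ≤ Xf.card := by omega
    have hθv : Xf.card - r < Xf.card := by omega
    -- the key counting fact
    have key2 : ∀ t : α, t ∈ T → ∀ i, (T.filter (fun y => y < t)).card = i →
        (Xf.filter (fun y => y < t)).card ≤ Xf.card - r + i := by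
      intro t htT i hi
      set j := (Tᶜ.filter (fun y => t < y)).card with hjdef
      have hjm : j ≤ n - r := by
        rw [hjdef, ← hTc]; exact Finset.card_filter_le Tᶜ _
      have hIt : (I.toFinset.filter (fun y => t ≤ y)).card ≤ j := by
        by_cases hjm' : j < n - r
        · have hc_lt : Tᶜ.orderEmbOfFin hTc ⟨n - r - 1 - j, by omega⟩ < t := by
            refine lt_of_le_of_ne
              (orderEmbOfFin_le_count' Tᶜ hTc t (n - r - 1 - j) (by omega) (by omega) (by omega))
              ?_
            intro hEq
            have hmem := Tᶜ.orderEmbOfFin_mem hTc ⟨n - r - 1 - j, by omega⟩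
            rw [hEq] at hmem
            exact (Finset.mem_compl.1 hmem) htT
          have hnc : (I ∩ {s | t ≤ s}).ncard = (I.toFinset.filter (fun y => t ≤ y)).card := by
            have he2 : I ∩ {s | t ≤ s} = ↑(I.toFinset.filter (fun y => t ≤ y)) := by
              ext x; simp [Set.mem_toFinset]
            rw [he2, Set.ncard_coe_finset]
          calc (I.toFinset.filter (fun y => t ≤ y)).card
              = (I ∩ {s | t ≤ s}).ncard := hnc.symm
            _ ≤ (I ∩ flagOfRev Tᶜ hTc j).ncard := by
                rw [hrev_lt j hjm']
                refine Set.ncard_le_ncard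
                  (Set.inter_subset_inter (le_refl I) (fun x hx => lt_of_lt_of_le hc_lt hx))
                  (Set.toFinite _)
            _ ≤ j := h j hjm'.le
        · have hj' : j = n - r := by omega
          calc (I.toFinset.filter (fun y => t ≤ y)).card
              ≤ I.toFinset.card := Finset.card_filter_le _ _
            _ = I.ncard := (Set.ncard_eq_toFinset_card' I).symm
            _ ≤ n - r := hIm
            _ = j := hj'.symm
      have hTge : (T.filter (fun y => t ≤ y)).card = r - i := by
        have hcongr : T.filter (fun y => t ≤ y) = T.filter (fun y => ¬ y < t) :=
          Finset.filter_congr (by intro x hx; simp [not_lt])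
        have hsum := Finset.card_filter_add_card_filter_not
          (s := T) (p := fun y => y < t)
        rw [hcongr]
        omega
      have hTcge : (Tᶜ.filter (fun y => t ≤ y)).card = j := by
        have hcongr : Tᶜ.filter (fun y => t ≤ y) = Tᶜ.filter (fun y => t < y) := by
          apply Finset.filter_congr
          intro x hx
          constructor
          · intro hle
            rcases eq_or_lt_of_le hle with hEq | hlt
            · exact absurd htT (by rw [hEq]; exact Finset.mem_compl.1 hx)
            · exact hlt
          · exact le_of_lt
        rw [hcongr, hjdef]
      have huniv2 : (Finset.univ.filter (fun y => t ≤ y)).card = (r - i) + j := by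
        rw [card_filter_univ T (fun y => t ≤ y), hTge, hTcge]
      have hpart := card_filter_univ I.toFinset (fun y => t ≤ y)
      have hXge : r - i ≤ (Xf.filter (fun y => t ≤ y)).card := by
        rw [hXdef]; omega
      have hsum2 := Finset.card_filter_add_card_filter_not
        (s := Xf) (p := fun y => y < t)
      have hcongr2 : Xf.filter (fun y => ¬ y < t) = Xf.filter (fun y => t ≤ y) :=
        Finset.filter_congr (by intro x hx; simp [not_lt])
      rw [hcongr2] at hsum2
      omega
    -- the candidate base
    set Jf : Finset α :=
      Xf.filter (fun y => Xf.orderEmbOfFin rfl ⟨Xf.card - r, hθv⟩ ≤ y) with hJdef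
    have hJcard : Jf.card = r := by
      rw [hJdef, filter_le_card' Xf rfl (Xf.card - r) hθv]
      omega
    have hJind : M.Indep ↑Jf := by
      rw [hInd]
      intro i hi
      by_cases hir : i < r
      · rw [hflag_lt i hir]
        have he : (↑Jf : Set α) ∩ {s | s < T.orderEmbOfFin hT ⟨i, hir⟩}
            = ↑(Jf.filter (fun y => y < T.orderEmbOfFin hT ⟨i, hir⟩)) := by
          ext x; simp
        rw [he, Set.ncard_coe_finset, hJdef, Finset.filter_filter]
        rcases le_or_gt (T.orderEmbOfFin hT ⟨i, hir⟩) (Xf.orderEmbOfFin rfl ⟨Xf.card - r, hθv⟩)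
          with hc | hc
        · have hempty : Xf.filter (fun y =>
              Xf.orderEmbOfFin rfl ⟨Xf.card - r, hθv⟩ ≤ y ∧ y < T.orderEmbOfFin hT ⟨i, hir⟩) = ∅ :=
            Finset.filter_false_of_mem (by
              rintro x hx ⟨h1, h2⟩
              exact absurd (lt_of_lt_of_le h2 hc) (not_lt.2 h1))
          rw [hempty]
          simp
        · have heq : Xf.filter (fun y =>
                Xf.orderEmbOfFin rfl ⟨Xf.card - r, hθv⟩ ≤ y ∧ y < T.orderEmbOfFin hT ⟨i, hir⟩)
              = (Xf.filter (fun y => y < T.orderEmbOfFin hT ⟨i, hir⟩))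
                \ (Xf.filter (fun y => y < Xf.orderEmbOfFin rfl ⟨Xf.card - r, hθv⟩)) := by
            ext x
            simp only [Finset.mem_filter, Finset.mem_sdiff, not_and, not_lt]
            constructor
            · rintro ⟨hx, h1, h2⟩
              exact ⟨⟨hx, h2⟩, fun _ => h1⟩
            · rintro ⟨⟨hx, h2⟩, h1⟩
              exact ⟨hx, h1 hx, h2⟩
          have hsubs : Xf.filter (fun y => y < Xf.orderEmbOfFin rfl ⟨Xf.card - r, hθv⟩)
              ⊆ Xf.filter (fun y => y < T.orderEmbOfFin hT ⟨i, hir⟩) := by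
            intro x hx
            rw [Finset.mem_filter] at hx ⊢
            exact ⟨hx.1, lt_trans hx.2 hc⟩
          rw [heq, Finset.card_sdiff_of_subset hsubs]
          have hθcnt : (Xf.filter (fun y => y < Xf.orderEmbOfFin rfl ⟨Xf.card - r, hθv⟩)).card
              = Xf.card - r := filter_lt_card' Xf rfl (Xf.card - r) hθv
          have hkey := key2 (T.orderEmbOfFin hT ⟨i, hir⟩) (T.orderEmbOfFin_mem hT ⟨i, hir⟩) i
            (filter_lt_card' T hT i hir)
          omega
      · rw [hflag_top i hir, Set.inter_univ, Set.ncard_coe_finset, hJcard]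
        omega
    refine ⟨↑Jf, (hbase _).2 ⟨hJind, by rw [Set.ncard_coe_finset, hJcard]⟩, ?_⟩
    rw [Set.disjoint_right]
    intro x hx hxI
    have hxJ : x ∈ Jf := hx
    have hxX : x ∈ Xf := Finset.mem_of_mem_filter x (by rw [hJdef] at hxJ; exact hxJ)
    rw [hXdef, Finset.mem_compl, Set.mem_toFinset] at hxX
    exact hxX hxI
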